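/- In a commutative ring equipped with operations (− choose n) satisfying the five numerical axioms (Vandermonde for sums, the product formula for (ab choose n), the product-of-binomials formula, (1 choose n) = 0 for n ≥ 2, and (a choose 0) = 1, (a choose 1) = a), if n·r = 0 for some r in the ring and n, m ∈ ℕ, then m·n·(r choose m) = 0. -/

import Mathlib

/-- A numerical ring (Ekedahl): a commutative unital ring with unary binomial coefficient
operations satisfying axioms I–V. -/
structure NumericalRing (R : Type*) [CommRing R] where
  /-- The binomial coefficient operations `a ↦ (a choose n)`. -/
  choose : R → ℕ → R
  /-- Axiom I (Vandermonde): `(a+b choose n) = Σ_{p+q=n} (a choose p)(b choose q)`. -/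
  axiom_I : ∀ a b : R, ∀ n : ℕ, choose (a + b) n =
    ∑ pq ∈ Finset.HasAntidiagonal.antidiagonal n, choose a pq.1 * choose b pq.2
  /-- Axiom II: `(ab choose n) = Σ_{m=0}^{n} (a choose m)
    Σ_{q_1+⋯+q_m=n, q_i ≥ 1} (b choose q_1)⋯(b choose q_m)`. -/
  axiom_II : ∀ a b : R, ∀ n : ℕ, choose (a * b) n =
    ∑ m ∈ Finset.range (n + 1), choose a m *
      ∑ q ∈ (Finset.Nat.antidiagonalTuple m n).filter (fun q => ∀ i, 1 ≤ q i),
        ∏ i, choose b (q i)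
  /-- Axiom III: `(a choose m)(a choose n) =
    Σ_{k=0}^{n} (a choose m+k)(m+k choose n)(n choose k)`. -/
  axiom_III : ∀ a : R, ∀ m n : ℕ, choose a m * choose a n =
    ∑ k ∈ Finset.range (n + 1), choose a (m + k) * ((m + k).choose n : R) * (n.choose k : R)
  /-- Axiom IV: `(1 choose n) = 0` for `n ≥ 2`. -/
  axiom_IV : ∀ n : ℕ, 2 ≤ n → choose 1 n = 0
  /-- Axiom V: `(a choose 0) = 1`. -/
  axiom_V0 : ∀ a : R, choose a 0 = 1
  /-- Axiom V: `(a choose 1) = a`. -/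
  axiom_V1 : ∀ a : R, choose a 1 = a

/-- The classical recursion `r·(r choose m) = m·(r choose m) + (m+1)·(r choose m+1)`. -/
theorem numericalRing_key {R : Type*} [CommRing R] (N : NumericalRing R) (r : R) (m : ℕ) :
    r * N.choose r m = m • N.choose r m + (m + 1) • N.choose r (m + 1) := by
  have h := N.axiom_III r 1 m
  rw [N.axiom_V1] at h
  rw [h]
  cases m with
  | zero => simp [N.axiom_V0]
  | succ m =>
    rw [Finset.sum_range_succ, Finset.sum_range_succ]
    have hz : ∑ k ∈ Finset.range m,
        N.choose r (1 + k) * ((1 + k).choose (m + 1) : R) * ((m + 1).choose k : R) = 0 := by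
      apply Finset.sum_eq_zero
      intro k hk
      have hk' := Finset.mem_range.mp hk
      have : (1 + k).choose (m + 1) = 0 :=
        Nat.choose_eq_zero_of_lt (by omega)
      simp [this]
    rw [hz]
    have e1 : (1 + m).choose (m + 1) = 1 := by rw [Nat.add_comm]; exact Nat.choose_self _
    have e2 : (m + 1).choose m = m + 1 := Nat.choose_succ_self_right m
    have e3 : (1 + (m + 1)).choose (m + 1) = m + 2 := by
      rw [Nat.add_comm]; exact Nat.choose_succ_self_right (m + 1)
    rw [e1, e2, e3, Nat.choose_self]
    have h1 : 1 + m = m + 1 := Nat.add_comm 1 m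
    have h2 : 1 + (m + 1) = m + 1 + 1 := by omega
    rw [h1, h2]
    push_cast
    simp only [nsmul_eq_mul]
    push_cast
    ring

/-- In a numerical ring, if `n·r = 0` then `m·n·(r choose m) = 0`. -/
theorem numericalRing_smul_choose_eq_zero {R : Type*} [CommRing R] (N : NumericalRing R)
    (r : R) (n m : ℕ) (h : n • r = 0) :
    (m * n) • N.choose r m = 0 := by
  induction m with
  | zero => simp
  | succ m ih =>
    have key := numericalRing_key N r m
    have h0 : n • (r * N.choose r m) = 0 := by
      rw [← smul_mul_assoc, h, zero_mul]
    rw [key, smul_add, smul_smul, smul_smul] at h0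
    have hm : (n * m) • N.choose r m = 0 := by
      rw [mul_comm]; exact ih
    rw [hm, zero_add] at h0
    rw [show (m + 1) * n = n * (m + 1) from mul_comm _ _]
    exact h0
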